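/- arXiv:2309.01173 — 2 statements merged into one kernel-verified Lean document; each statement's English description precedes it below -/
import Mathlib

section
/- Under the hypotheses of the multi-step Jeffreys's law, ln K^I_n + ln K^II_n ≥ Σ_{i=1}^n ρ_H(P_i, Q_i), where ρ_H(P,Q) := Σ_y (√P(y)−√Q(y))² = 2−2H(P,Q). -/
open Finset

theorem jeffreys_law_log_bound
    {Y : Type*} [Fintype Y] [Nonempty Y] (n : ℕ)
    (P Q : ℕ → Y → ℝ) (y : ℕ → Y)
    (hP0 : ∀ i y', 0 < P i y') (hPsum : ∀ i, ∑ y', P i y' = 1)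
    (hQ0 : ∀ i y', 0 < Q i y') (hQsum : ∀ i, ∑ y', Q i y' = 1) :
    let H := fun i => ∑ y', Real.sqrt (P i y' * Q i y')
    let f := fun i y' => Real.sqrt (P i y' * Q i y') / (H i * P i y')
    let g := fun i y' => Real.sqrt (P i y' * Q i y') / (H i * Q i y')
    Real.log (∏ i ∈ Finset.range n, f i (y i))
      + Real.log (∏ i ∈ Finset.range n, g i (y i))
    ≥ ∑ i ∈ Finset.range n,
        ∑ y', (Real.sqrt (P i y') - Real.sqrt (Q i y')) ^ 2 := by
  intro H f g
  have hH : ∀ i, 0 < H i := fun i =>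
    Finset.sum_pos (fun y' _ => Real.sqrt_pos.2 (mul_pos (hP0 i y') (hQ0 i y')))
      univ_nonempty
  have hf : ∀ i, 0 < f i (y i) := fun i =>
    div_pos (Real.sqrt_pos.2 (mul_pos (hP0 i (y i)) (hQ0 i (y i))))
      (mul_pos (hH i) (hP0 i (y i)))
  have hg : ∀ i, 0 < g i (y i) := fun i =>
    div_pos (Real.sqrt_pos.2 (mul_pos (hP0 i (y i)) (hQ0 i (y i))))
      (mul_pos (hH i) (hQ0 i (y i)))
  rw [Real.log_prod (fun i _ => (hf i).ne'),
    Real.log_prod (fun i _ => (hg i).ne'), ← Finset.sum_add_distrib]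
  refine Finset.sum_le_sum fun i _ => ?_
  have hfg : f i (y i) * g i (y i) = (H i ^ 2)⁻¹ := by
    have hp := hP0 i (y i); have hq := hQ0 i (y i); have hh := hH i
    have hs : Real.sqrt (P i (y i) * Q i (y i)) * Real.sqrt (P i (y i) * Q i (y i))
        = P i (y i) * Q i (y i) := Real.mul_self_sqrt (mul_pos hp hq).le
    simp only [f, g, div_mul_div_comm, hs]
    field_simp
  have hsum : ∑ y', (Real.sqrt (P i y') - Real.sqrt (Q i y')) ^ 2 = 2 - 2 * H i := by
    have : ∀ y', (Real.sqrt (P i y') - Real.sqrt (Q i y')) ^ 2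
        = P i y' + Q i y' - 2 * Real.sqrt (P i y' * Q i y') := by
      intro y'
      have hp : Real.sqrt (P i y') ^ 2 = P i y' := Real.sq_sqrt (hP0 i y').le
      have hq : Real.sqrt (Q i y') ^ 2 = Q i y' := Real.sq_sqrt (hQ0 i y').le
      have hm : Real.sqrt (P i y' * Q i y') = Real.sqrt (P i y') * Real.sqrt (Q i y') :=
        Real.sqrt_mul (hP0 i y').le _
      rw [hm]; nlinarith
    rw [Finset.sum_congr rfl fun y' _ => this y']
    simp only [Finset.sum_sub_distrib, Finset.sum_add_distrib, hPsum i, hQsum i,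
      ← Finset.mul_sum]
    show (1 : ℝ) + 1 - 2 * H i = 2 - 2 * H i
    ring
  rw [hsum, ← Real.log_mul (hf i).ne' (hg i).ne', hfg, Real.log_inv, Real.log_pow]
  have hlog : Real.log (H i) ≤ H i - 1 := Real.log_le_sub_one_of_pos (hH i)
  push_cast
  linarith
end

section
/- Theorem (χ² translation of capital, one step): Let P, Q be probability measures on a finite set Y with P, Q everywhere positive, and let f : Y → [0,∞) satisfy Σ_y f(y)·P(y) = 1. Let χ := Σ_y Q(y)²/P(y). Define g(y) := (1/2)·(Q(y)/P(y))·(1/χ) + (1/2)·(P(y)/Q(y))·f(y). Then g ≥ 0, Σ_y g(y)·Q(y) = 1, and for every y, g(y) ≥ √(f(y)/χ). -/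
open Finset

lemma sqrt_mul_le_half_add {a b : ℝ} (ha : 0 ≤ a) (hb : 0 ≤ b) :
    Real.sqrt (a * b) ≤ a / 2 + b / 2 := by
  have h : a * b ≤ (a / 2 + b / 2) ^ 2 := by nlinarith [sq_nonneg (a - b)]
  calc Real.sqrt (a * b) ≤ Real.sqrt ((a / 2 + b / 2) ^ 2) := Real.sqrt_le_sqrt h
    _ = a / 2 + b / 2 := Real.sqrt_sq (by linarith)

theorem chi_sq_capital_translation_one_step
    {Y : Type*} [Fintype Y] [Nonempty Y] (P Q : Y → ℝ) (f : Y → ℝ)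
    (hP0 : ∀ y, 0 < P y) (hPsum : ∑ y, P y = 1)
    (hQ0 : ∀ y, 0 < Q y) (hQsum : ∑ y, Q y = 1)
    (hf0 : ∀ y, 0 ≤ f y) (hf1 : ∑ y, f y * P y = 1) :
    let χ := ∑ y, Q y ^ 2 / P y
    let g := fun y => (1 / 2) * (Q y / P y) * (1 / χ)
        + (1 / 2) * (P y / Q y) * f y
    (∀ y, 0 ≤ g y) ∧ (∑ y, g y * Q y = 1)
    ∧ (∀ y, g y ≥ Real.sqrt (f y / χ)) := by
  intro χ g
  have hχ : 0 < χ := Finset.sum_pos (fun y _ => div_pos (pow_pos (hQ0 y) 2) (hP0 y)) univ_nonempty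
  have hg0 : ∀ y, 0 ≤ g y := by
    intro y
    have := hP0 y; have := hQ0 y; have := hf0 y
    have h1 : 0 ≤ (1 / 2) * (Q y / P y) * (1 / χ) := by positivity
    have h2 : 0 ≤ (1 / 2) * (P y / Q y) * f y := by positivity
    simpa [g] using add_nonneg h1 h2
  refine ⟨hg0, ?_, ?_⟩
  · have : ∑ y, g y * Q y
        = (1 / 2) * (1 / χ) * ∑ y, Q y ^ 2 / P y + (1 / 2) * ∑ y, f y * P y := by
      rw [Finset.mul_sum, Finset.mul_sum, ← Finset.sum_add_distrib]
      refine Finset.sum_congr rfl fun y _ => ?_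
      have hp := (hP0 y).ne'
      have hq := (hQ0 y).ne'
      simp only [g]
      field_simp
    rw [this, hf1]
    have : χ = ∑ y, Q y ^ 2 / P y := rfl
    rw [← this]
    field_simp
    ring
  · intro y
    have hp := hP0 y
    have hq := hQ0 y
    have hf := hf0 y
    have ha : 0 ≤ Q y / P y * (1 / χ) := by positivity
    have hb : 0 ≤ P y / Q y * f y := by positivity
    have hab : Q y / P y * (1 / χ) * (P y / Q y * f y) = f y / χ := by
      field_simp [(hP0 y).ne', (hQ0 y).ne']
    have := sqrt_mul_le_half_add ha hb
    rw [hab] at this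
    simpa [g, ge_iff_le, mul_comm, mul_assoc, mul_left_comm, div_eq_mul_inv] using
      this.trans_eq (by ring)
end
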